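/- Let (A,B,E) and (A',B',E') be two bipartite graphs with A, B, A', B' countable, and suppose each of them has the bipartite k-extension property for every k ∈ ℕ. Then they are isomorphic as bipartite graphs: there exist bijections f : A → A' and g : B → B' such that for all a ∈ A and b ∈ B, (a,b) ∈ E if and only if (f(a),g(b)) ∈ E'. -/

import Mathlib

/-- A bipartite graph `(A,B,E)` (with `E ⊆ A × B` given as a relation) has the
bipartite `k`-extension property. -/
def BipExtension {A B : Type} (E : A → B → Prop) (k : ℕ) : Prop :=
  (∀ (X Y : Finset A) (Z : Finset B), Disjoint X Y →
      X.card + Y.card + Z.card ≤ k - 1 →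
      ∃ v : B, v ∉ Z ∧ (∀ x ∈ X, E x v) ∧ (∀ y ∈ Y, ¬ E y v)) ∧
  (∀ (X Y : Finset B) (Z : Finset A), Disjoint X Y →
      X.card + Y.card + Z.card ≤ k - 1 →
      ∃ v : A, v ∉ Z ∧ (∀ x ∈ X, E v x) ∧ (∀ y ∈ Y, ¬ E v y))

section Aux

attribute [local instance] Classical.propDecidable

variable {A B A' B' : Type}

/-- A finite partial isomorphism between two bipartite graphs, given as two finite
sets of pairs. -/
def Good (E : A → B → Prop) (E' : A' → B' → Prop)
    (s : Finset (A × A')) (t : Finset (B × B')) : Prop :=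
  (∀ p ∈ s, ∀ q ∈ s, (p.1 = q.1 ↔ p.2 = q.2)) ∧
  (∀ p ∈ t, ∀ q ∈ t, (p.1 = q.1 ↔ p.2 = q.2)) ∧
  (∀ p ∈ s, ∀ q ∈ t, (E p.1 q.1 ↔ E' p.2 q.2))

lemma mem_swap_image {α β : Type} (s : Finset (α × β)) (x : β) (y : α) :
    (x, y) ∈ s.image Prod.swap ↔ (y, x) ∈ s := by
  constructor
  · intro h
    obtain ⟨p, hp, he⟩ := Finset.mem_image.1 h
    have hpe : p = (y, x) := Prod.swap_injective he
    rwa [← hpe]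
  · intro h
    exact Finset.mem_image.2 ⟨(y, x), h, rfl⟩

lemma swap_swap_image {α β : Type} (s : Finset (α × β)) :
    (s.image Prod.swap).image Prod.swap = s := by
  ext ⟨a, b⟩
  rw [mem_swap_image, mem_swap_image]

lemma good_swap {E : A → B → Prop} {E' : A' → B' → Prop}
    {s : Finset (A × A')} {t : Finset (B × B')} (h : Good E E' s t) :
    Good E' E (s.image Prod.swap) (t.image Prod.swap) := by
  obtain ⟨h1, h2, h3⟩ := h
  refine ⟨?_, ?_, ?_⟩
  · intro p hp q hq
    obtain ⟨p0, hp0, rfl⟩ := Finset.mem_image.1 hp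
    obtain ⟨q0, hq0, rfl⟩ := Finset.mem_image.1 hq
    exact (h1 p0 hp0 q0 hq0).symm
  · intro p hp q hq
    obtain ⟨p0, hp0, rfl⟩ := Finset.mem_image.1 hp
    obtain ⟨q0, hq0, rfl⟩ := Finset.mem_image.1 hq
    exact (h2 p0 hp0 q0 hq0).symm
  · intro p hp q hq
    obtain ⟨p0, hp0, rfl⟩ := Finset.mem_image.1 hp
    obtain ⟨q0, hq0, rfl⟩ := Finset.mem_image.1 hq
    exact (h3 p0 hp0 q0 hq0).symm

lemma good_flip {E : A → B → Prop} {E' : A' → B' → Prop}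
    {s : Finset (A × A')} {t : Finset (B × B')} (h : Good E E' s t) :
    Good (fun b a => E a b) (fun b' a' => E' a' b') t s :=
  ⟨h.2.1, h.1, fun p hp q hq => h.2.2 q hq p hp⟩

lemma bipext_flip {E : A → B → Prop} (h : ∀ k, BipExtension E k) (k : ℕ) :
    BipExtension (fun b a => E a b) k :=
  ⟨(h k).2, (h k).1⟩

lemma extend_left {E : A → B → Prop} {E' : A' → B' → Prop}
    (hE' : ∀ k, BipExtension E' k)
    {s : Finset (A × A')} {t : Finset (B × B')}
    (h : Good E E' s t) (a : A) :
    ∃ a', Good E E' (insert (a, a') s) t := by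
  classical
  obtain ⟨h1, h2, h3⟩ := h
  by_cases ha : ∃ a', (a, a') ∈ s
  · obtain ⟨a', h'⟩ := ha
    exact ⟨a', by rw [Finset.insert_eq_self.2 h']; exact ⟨h1, h2, h3⟩⟩
  · push_neg at ha
    set X := (t.filter fun q => E a q.1).image Prod.snd with hXdef
    set Y := (t.filter fun q => ¬ E a q.1).image Prod.snd with hYdef
    set Z := s.image Prod.snd with hZdef
    have hdisj : Disjoint X Y := by
      rw [Finset.disjoint_left]
      intro b' hbX hbY
      obtain ⟨q1, hq1, hq1e⟩ := Finset.mem_image.1 hbX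
      obtain ⟨q2, hq2, hq2e⟩ := Finset.mem_image.1 hbY
      rw [Finset.mem_filter] at hq1 hq2
      have heq : q2.1 = q1.1 := (h2 q2 hq2.1 q1 hq1.1).2 (hq2e.trans hq1e.symm)
      exact hq2.2 (by rw [heq]; exact hq1.2)
    obtain ⟨v, hvZ, hvX, hvY⟩ :=
      (hE' (X.card + Y.card + Z.card + 2)).2 X Y Z hdisj (by omega)
    have hnotdom : ∀ q ∈ s, a ≠ q.1 := by
      intro q hq hq1
      exact ha q.2 (by rwa [show (a, q.2) = q from Prod.ext hq1 rfl])
    have hnotran : ∀ q ∈ s, v ≠ q.2 := by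
      intro q hq hv
      exact hvZ (Finset.mem_image.2 ⟨q, hq, hv.symm⟩)
    refine ⟨v, ?_, h2, ?_⟩
    · intro p hp q hq
      rcases Finset.mem_insert.1 hp with rfl | hp'
      · rcases Finset.mem_insert.1 hq with rfl | hq'
        · simp
        · exact iff_of_false (hnotdom q hq') (hnotran q hq')
      · rcases Finset.mem_insert.1 hq with rfl | hq'
        · exact iff_of_false (fun h => hnotdom p hp' h.symm) (fun h => hnotran p hp' h.symm)
        · exact h1 p hp' q hq'
    · intro p hp q hq
      rcases Finset.mem_insert.1 hp with rfl | hp'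
      · by_cases hEb : E a q.1
        · exact iff_of_true hEb
            (hvX q.2 (Finset.mem_image.2 ⟨q, Finset.mem_filter.2 ⟨hq, hEb⟩, rfl⟩))
        · exact iff_of_false hEb
            (hvY q.2 (Finset.mem_image.2 ⟨q, Finset.mem_filter.2 ⟨hq, hEb⟩, rfl⟩))
      · exact h3 p hp' q hq

lemma extend_right {E : A → B → Prop} {E' : A' → B' → Prop}
    (hE : ∀ k, BipExtension E k)
    {s : Finset (A × A')} {t : Finset (B × B')}
    (h : Good E E' s t) (a' : A') :
    ∃ a, Good E E' (insert (a, a') s) t := by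
  obtain ⟨a, ha⟩ := extend_left hE (good_swap h) a'
  have hthis := good_swap ha
  have e1 : (insert (a', a) (s.image Prod.swap)).image Prod.swap = insert (a, a') s := by
    rw [Finset.image_insert, swap_swap_image]; rfl
  rw [e1, swap_swap_image] at hthis
  exact ⟨a, hthis⟩

lemma extend_left_B {E : A → B → Prop} {E' : A' → B' → Prop}
    (hE' : ∀ k, BipExtension E' k)
    {s : Finset (A × A')} {t : Finset (B × B')}
    (h : Good E E' s t) (b : B) :
    ∃ b', Good E E' s (insert (b, b') t) := by
  obtain ⟨b', hb⟩ := extend_left (bipext_flip hE') (good_flip h) b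
  exact ⟨b', good_flip hb⟩

lemma extend_right_B {E : A → B → Prop} {E' : A' → B' → Prop}
    (hE : ∀ k, BipExtension E k)
    {s : Finset (A × A')} {t : Finset (B × B')}
    (h : Good E E' s t) (b' : B') :
    ∃ b, Good E E' s (insert (b, b') t) := by
  obtain ⟨b, hb⟩ := extend_right (bipext_flip hE) (good_flip h) b'
  exact ⟨b, good_flip hb⟩

lemma good_step {E : A → B → Prop} {E' : A' → B' → Prop}
    (hE : ∀ k, BipExtension E k) (hE' : ∀ k, BipExtension E' k)
    {s : Finset (A × A')} {t : Finset (B × B')}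
    (h : Good E E' s t) (a : A) (a' : A') (b : B) (b' : B') :
    ∃ s2 t2, Good E E' s2 t2 ∧ s ⊆ s2 ∧ t ⊆ t2 ∧
      (∃ x, (a, x) ∈ s2) ∧ (∃ x, (x, a') ∈ s2) ∧
      (∃ x, (b, x) ∈ t2) ∧ (∃ x, (x, b') ∈ t2) := by
  obtain ⟨x1, h1⟩ := extend_left hE' h a
  obtain ⟨x2, h2⟩ := extend_right hE h1 a'
  obtain ⟨x3, h3⟩ := extend_left_B hE' h2 b
  obtain ⟨x4, h4⟩ := extend_right_B hE h3 b'
  refine ⟨_, _, h4, ?_, ?_, ⟨x1, ?_⟩, ⟨x2, ?_⟩, ⟨x3, ?_⟩, ⟨x4, ?_⟩⟩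
  · exact (Finset.subset_insert _ _).trans (Finset.subset_insert _ _)
  · exact (Finset.subset_insert _ _).trans (Finset.subset_insert _ _)
  · exact Finset.mem_insert_of_mem (Finset.mem_insert_self _ _)
  · exact Finset.mem_insert_self _ _
  · exact Finset.mem_insert_of_mem (Finset.mem_insert_self _ _)
  · exact Finset.mem_insert_self _ _

end Aux

/-- Any two countable bipartite graphs having the bipartite `k`-extension
property for every `k` are isomorphic as bipartite graphs. -/
theorem bipartite_rado_unique
    (A B A' B' : Type) [Countable A] [Countable B] [Countable A'] [Countable B']
    (E : A → B → Prop) (E' : A' → B' → Prop)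
    (hE : ∀ k : ℕ, BipExtension E k) (hE' : ∀ k : ℕ, BipExtension E' k) :
    ∃ (f : A ≃ A') (g : B ≃ B'), ∀ (a : A) (b : B), E a b ↔ E' (f a) (g b) := by
  classical
  have nA : Nonempty A := by
    obtain ⟨v, -⟩ := (hE 1).2 ∅ ∅ ∅ (by simp) (by simp); exact ⟨v⟩
  have nB : Nonempty B := by
    obtain ⟨v, -⟩ := (hE 1).1 ∅ ∅ ∅ (by simp) (by simp); exact ⟨v⟩
  have nA' : Nonempty A' := by
    obtain ⟨v, -⟩ := (hE' 1).2 ∅ ∅ ∅ (by simp) (by simp); exact ⟨v⟩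
  have nB' : Nonempty B' := by
    obtain ⟨v, -⟩ := (hE' 1).1 ∅ ∅ ∅ (by simp) (by simp); exact ⟨v⟩
  obtain ⟨eA, hsA⟩ := exists_surjective_nat A
  obtain ⟨eB, hsB⟩ := exists_surjective_nat B
  obtain ⟨eA', hsA'⟩ := exists_surjective_nat A'
  obtain ⟨eB', hsB'⟩ := exists_surjective_nat B'
  choose S T hSTgood hSsub hTsub mS1 mS2 mT1 mT2 using
    fun (s : Finset (A × A')) (t : Finset (B × B')) (h : Good E E' s t)
      (a : A) (a' : A') (b : B) (b' : B') => good_step hE hE' h a a' b b'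
  let P : ℕ → Finset (A × A') × Finset (B × B') := fun n =>
    Nat.rec (∅, ∅) (fun n p =>
      if h : Good E E' p.1 p.2 then
        (S p.1 p.2 h (eA n) (eA' n) (eB n) (eB' n),
         T p.1 p.2 h (eA n) (eA' n) (eB n) (eB' n))
      else p) n
  have hPsucc : ∀ n, P (n + 1) =
      if h : Good E E' (P n).1 (P n).2 then
        (S (P n).1 (P n).2 h (eA n) (eA' n) (eB n) (eB' n),
         T (P n).1 (P n).2 h (eA n) (eA' n) (eB n) (eB' n))
      else P n := fun n => rfl
  have hgood : ∀ n, Good E E' (P n).1 (P n).2 := by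
    intro n
    induction n with
    | zero =>
      rw [show P 0 = (∅, ∅) from rfl]
      exact ⟨by simp, by simp, by simp⟩
    | succ n ih =>
      rw [hPsucc n, dif_pos ih]
      exact hSTgood _ _ ih _ _ _ _
  have hstep1 : ∀ n, (P n).1 ⊆ (P (n + 1)).1 := by
    intro n; rw [hPsucc n, dif_pos (hgood n)]; exact hSsub _ _ _ _ _ _ _
  have hstep2 : ∀ n, (P n).2 ⊆ (P (n + 1)).2 := by
    intro n; rw [hPsucc n, dif_pos (hgood n)]; exact hTsub _ _ _ _ _ _ _
  have hmono1 : ∀ {m n}, m ≤ n → (P m).1 ⊆ (P n).1 := by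
    intro m n h
    induction h with
    | refl => exact Finset.Subset.refl _
    | step h ih => exact ih.trans (hstep1 _)
  have hmono2 : ∀ {m n}, m ≤ n → (P m).2 ⊆ (P n).2 := by
    intro m n h
    induction h with
    | refl => exact Finset.Subset.refl _
    | step h ih => exact ih.trans (hstep2 _)
  -- totality
  have total1 : ∀ a : A, ∃ n x, (a, x) ∈ (P n).1 := by
    intro a
    obtain ⟨n, rfl⟩ := hsA a
    obtain ⟨x, hx⟩ := mS1 (P n).1 (P n).2 (hgood n) (eA n) (eA' n) (eB n) (eB' n)
    exact ⟨n + 1, x, by rw [hPsucc n, dif_pos (hgood n)]; exact hx⟩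
  have total2 : ∀ a' : A', ∃ n x, (x, a') ∈ (P n).1 := by
    intro a'
    obtain ⟨n, rfl⟩ := hsA' a'
    obtain ⟨x, hx⟩ := mS2 (P n).1 (P n).2 (hgood n) (eA n) (eA' n) (eB n) (eB' n)
    exact ⟨n + 1, x, by rw [hPsucc n, dif_pos (hgood n)]; exact hx⟩
  have total3 : ∀ b : B, ∃ n x, (b, x) ∈ (P n).2 := by
    intro b
    obtain ⟨n, rfl⟩ := hsB b
    obtain ⟨x, hx⟩ := mT1 (P n).1 (P n).2 (hgood n) (eA n) (eA' n) (eB n) (eB' n)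
    exact ⟨n + 1, x, by rw [hPsucc n, dif_pos (hgood n)]; exact hx⟩
  have total4 : ∀ b' : B', ∃ n x, (x, b') ∈ (P n).2 := by
    intro b'
    obtain ⟨n, rfl⟩ := hsB' b'
    obtain ⟨x, hx⟩ := mT2 (P n).1 (P n).2 (hgood n) (eA n) (eA' n) (eB n) (eB' n)
    exact ⟨n + 1, x, by rw [hPsucc n, dif_pos (hgood n)]; exact hx⟩
  -- functionality and injectivity
  have fun1 : ∀ {n m a x y}, (a, x) ∈ (P n).1 → (a, y) ∈ (P m).1 → x = y := by
    intro n m a x y h1 h2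
    have h1' := hmono1 (le_max_left n m) h1
    have h2' := hmono1 (le_max_right n m) h2
    exact ((hgood (max n m)).1 (a, x) h1' (a, y) h2').1 rfl
  have inj1 : ∀ {n m x y a'}, (x, a') ∈ (P n).1 → (y, a') ∈ (P m).1 → x = y := by
    intro n m x y a' h1 h2
    have h1' := hmono1 (le_max_left n m) h1
    have h2' := hmono1 (le_max_right n m) h2
    exact ((hgood (max n m)).1 (x, a') h1' (y, a') h2').2 rfl
  have fun2 : ∀ {n m b x y}, (b, x) ∈ (P n).2 → (b, y) ∈ (P m).2 → x = y := by
    intro n m b x y h1 h2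
    have h1' := hmono2 (le_max_left n m) h1
    have h2' := hmono2 (le_max_right n m) h2
    exact ((hgood (max n m)).2.1 (b, x) h1' (b, y) h2').1 rfl
  have inj2 : ∀ {n m x y b'}, (x, b') ∈ (P n).2 → (y, b') ∈ (P m).2 → x = y := by
    intro n m x y b' h1 h2
    have h1' := hmono2 (le_max_left n m) h1
    have h2' := hmono2 (le_max_right n m) h2
    exact ((hgood (max n m)).2.1 (x, b') h1' (y, b') h2').2 rfl
  -- define f and g
  have f0 : ∀ a : A, ∃ x, ∃ n, (a, x) ∈ (P n).1 := by
    intro a; obtain ⟨n, x, h⟩ := total1 a; exact ⟨x, n, h⟩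
  have g0 : ∀ b : B, ∃ x, ∃ n, (b, x) ∈ (P n).2 := by
    intro b; obtain ⟨n, x, h⟩ := total3 b; exact ⟨x, n, h⟩
  choose f hf using f0
  choose g hg using g0
  have hfinj : Function.Injective f := by
    intro a c h
    obtain ⟨n, hn⟩ := hf a
    obtain ⟨m, hm⟩ := hf c
    rw [← h] at hm
    exact inj1 hn hm
  have hfsurj : Function.Surjective f := by
    intro a'
    obtain ⟨n, x, hx⟩ := total2 a'
    obtain ⟨m, hm⟩ := hf x
    exact ⟨x, fun1 hm hx⟩
  have hginj : Function.Injective g := by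
    intro a c h
    obtain ⟨n, hn⟩ := hg a
    obtain ⟨m, hm⟩ := hg c
    rw [← h] at hm
    exact inj2 hn hm
  have hgsurj : Function.Surjective g := by
    intro b'
    obtain ⟨n, x, hx⟩ := total4 b'
    obtain ⟨m, hm⟩ := hg x
    exact ⟨x, fun2 hm hx⟩
  refine ⟨Equiv.ofBijective f ⟨hfinj, hfsurj⟩, Equiv.ofBijective g ⟨hginj, hgsurj⟩, ?_⟩
  intro a b
  change E a b ↔ E' (f a) (g b)
  obtain ⟨n, hn⟩ := hf a
  obtain ⟨m, hm⟩ := hg b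
  have hn' := hmono1 (le_max_left n m) hn
  have hm' := hmono2 (le_max_right n m) hm
  exact (hgood (max n m)).2.2 (a, f a) hn' (b, g b) hm'
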